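/- For every finite list I of items in (0,1] and every r_L ∈ [0,1], let r* := min{|I_L|/(6·size(I_S)), 1} (with r* := 1 if size(I_S) = 0). Then PH3_{r_L}(I) ≤ B(r_L, r*)·OPT(I) + 9/2. -/

import Mathlib

/-- A packing of the list `I` of item sizes into `m` unit-capacity bins:
an assignment of item indices to bins such that each bin's contents sum to at most 1. -/
def IsPacking (I : List ℝ) (m : ℕ) (f : Fin I.length → Fin m) : Prop :=
  ∀ b : Fin m, ∑ i ∈ Finset.univ.filter (fun i => f i = b), I.get i ≤ 1

/-- `OPT I` is the minimum number of unit-capacity bins needed to pack `I`. -/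
noncomputable def OPT (I : List ℝ) : ℕ :=
  sInf {m | ∃ f : Fin I.length → Fin m, IsPacking I m f}

/-- The state maintained by the online algorithm PH3:
* `nXL`: number of XL-bins (each holds one extra large item);
* `nLarge`: number of large items so far, i.e. number of L-bins whose 2/3-sub-bin is used;
* `nM`: number of M-bins; `mOpen`: whether the current M-bin contains exactly one medium item;
* `nS`: number of S-bins; `sLevel`: level of the currently open S-bin;
* `nLS`: number of 1/3-sub-bins of L-bins used by small items so far;
  `lsLevel`: level of the currently open 1/3-sub-bin;
* `sizeSL`: total size of small items packed into L-bins so far;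
* `sizeS`: total size of all small items packed so far. -/
structure PH3State where
  nXL : ℕ
  nLarge : ℕ
  nM : ℕ
  mOpen : Bool
  nS : ℕ
  sLevel : ℝ
  nLS : ℕ
  lsLevel : ℝ
  sizeSL : ℝ
  sizeS : ℝ

/-- One step of PH3 with parameter `rL`: how the state changes upon arrival of item `a`.
Extra large items (`a ≥ 2/3`) get a new XL-bin; large items (`1/2 < a < 2/3`) get (the
2/3-sub-bin of) a new L-bin; medium items (`1/3 < a ≤ 1/2`) are paired in M-bins; a small
item (`a ≤ 1/3`) goes next-fit into the 1/3-sub-bins of L-bins if the total size of small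
items already packed into L-bins is smaller than `rL` times the total size of all small
items packed so far, and otherwise next-fit into S-bins. -/
noncomputable def PH3step (rL : ℝ) (st : PH3State) (a : ℝ) : PH3State :=
  if 2/3 ≤ a then
    { st with nXL := st.nXL + 1 }
  else if 1/2 < a then
    { st with nLarge := st.nLarge + 1 }
  else if 1/3 < a then
    if st.mOpen then { st with mOpen := false }
    else { st with nM := st.nM + 1, mOpen := true }
  else
    if st.sizeSL < rL * st.sizeS then
      -- pack into the 1/3-sub-bin of an L-bin, next-fit
      if st.nLS = 0 ∨ 1/3 < st.lsLevel + a then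
        { st with nLS := st.nLS + 1, lsLevel := a,
                  sizeSL := st.sizeSL + a, sizeS := st.sizeS + a }
      else
        { st with lsLevel := st.lsLevel + a,
                  sizeSL := st.sizeSL + a, sizeS := st.sizeS + a }
    else
      -- pack into an S-bin, next-fit
      if st.nS = 0 ∨ 1 < st.sLevel + a then
        { st with nS := st.nS + 1, sLevel := a, sizeS := st.sizeS + a }
      else
        { st with sLevel := st.sLevel + a, sizeS := st.sizeS + a }

/-- The number of bins used by PH3 with parameter `rL` on the input list `I`: the number of
XL-bins, plus the number of L-bins (an L-bin counts once whether it received a large item,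
small items, or both, so this is the maximum of `nLarge` and `nLS`), plus the number of
M-bins, plus the number of S-bins. -/
noncomputable def PH3 (rL : ℝ) (I : List ℝ) : ℕ :=
  let st := I.foldl (PH3step rL) ⟨0, 0, 0, false, 0, 0, 0, 0, 0, 0⟩
  st.nXL + max st.nLarge st.nLS + st.nM + st.nS


/-- The PH3 bound function `B(r_L, r*)`:
`B(r_L, r*) = 3/2 + min{1/(4r*), 3/(6r*+2)}·(r* − r_L)` if `r* ≥ r_L`, and
`B(r_L, r*) = 3/2 + min{3/(4r*), 9/(6r*+2)}·(r_L − r*)` if `r* < r_L`, where the minima are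
written out piecewise: the first equals `3/(6r*+2)` for `r* ≤ 1/3` and `1/(4r*)` for
`r* ≥ 1/3`, the second equals `9/(6r*+2)` for `r* ≤ 1/3` and `3/(4r*)` for `r* ≥ 1/3`
(in particular, for `r* = 0` both minima are taken as the second expression). -/
noncomputable def Bfun (rL rs : ℝ) : ℝ :=
  if rL ≤ rs then
    3/2 + (if rs ≤ 1/3 then 3/(6*rs + 2) else 1/(4*rs)) * (rs - rL)
  else
    3/2 + (if rs ≤ 1/3 then 9/(6*rs + 2) else 3/(4*rs)) * (rL - rs)

lemma countP_eq_sum (p : ℝ → Bool) (I : List ℝ) :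
    I.countP p = ∑ i : Fin I.length, (if p (I.get i) then 1 else 0) := by
  induction I with
  | nil => simp
  | cons a t ih =>
      rw [List.countP_cons]; simp only [List.length_cons]; rw [Fin.sum_univ_succ]
      simp only [List.get_cons_zero,
        show ∀ i : Fin t.length, (a::t).get i.succ = t.get i from fun _ => rfl]
      rw [ih]; by_cases hp : p a <;> simp [hp] <;> omega

lemma card_filter_eq_countP (p : ℝ → Bool) (I : List ℝ) :
    (Finset.univ.filter (fun i : Fin I.length => p (I.get i))).card = I.countP p := by
  rw [countP_eq_sum, Finset.card_filter]

lemma sum_get_eq (I : List ℝ) : ∑ i : Fin I.length, I.get i = I.sum := by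
  induction I with
  | nil => simp
  | cons a t ih =>
      simp only [List.length_cons]; rw [Fin.sum_univ_succ, List.sum_cons]
      simp only [List.get_cons_zero,
        show ∀ i : Fin t.length, (a::t).get i.succ = t.get i from fun _ => rfl, ih]

lemma get_mem' (I : List ℝ) (i : Fin I.length) : I.get i ∈ I := by
  exact List.get_mem I i

lemma opt_spec (I : List ℝ) (hI : ∀ a ∈ I, 0 < a ∧ a ≤ 1) :
    ∃ f : Fin I.length → Fin (OPT I), IsPacking I (OPT I) f := by
  have hne : {m | ∃ f : Fin I.length → Fin m, IsPacking I m f}.Nonempty := by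
    refine ⟨I.length, fun i => i, fun b => ?_⟩
    have h : Finset.univ.filter (fun i : Fin I.length => i = b) = {b} := by
      ext i; simp
    rw [h, Finset.sum_singleton]
    exact (hI _ (get_mem' I b)).2
  exact Nat.sInf_mem hne

lemma pack_size (I : List ℝ) {m : ℕ}
    (f : Fin I.length → Fin m) (hf : IsPacking I m f) : I.sum ≤ (m : ℝ) := by
  rw [← sum_get_eq, ← Finset.sum_fiberwise Finset.univ f (fun i => I.get i)]
  calc ∑ b : Fin m, ∑ i ∈ Finset.univ.filter (fun i => f i = b), I.get i
      ≤ ∑ _b : Fin m, (1:ℝ) := Finset.sum_le_sum (fun b _ => hf b)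
    _ = m := by simp

lemma pack_half (I : List ℝ) (hI : ∀ a ∈ I, 0 < a ∧ a ≤ 1) {m : ℕ}
    (f : Fin I.length → Fin m) (hf : IsPacking I m f) :
    I.countP (fun a => decide ((1:ℝ)/2 < a)) ≤ m := by
  rw [← card_filter_eq_countP]
  set T := Finset.univ.filter
    (fun i : Fin I.length => (fun a => decide ((1:ℝ)/2 < a)) (I.get i)) with hT
  have hinj : Set.InjOn f T := by
    intro i hi j hj hfij
    by_contra hne
    have hi' : (1:ℝ)/2 < I.get i := by
      have := Finset.mem_filter.1 hi; simpa using this.2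
    have hj' : (1:ℝ)/2 < I.get j := by
      have := Finset.mem_filter.1 hj; simpa using this.2
    have hsub : ({i, j} : Finset (Fin I.length)) ⊆
        Finset.univ.filter (fun k => f k = f i) := by
      intro k hk
      rcases Finset.mem_insert.1 hk with rfl | hk
      · simp
      · rw [Finset.mem_singleton.1 hk]; simp [hfij]
    have hs : I.get i + I.get j ≤ ∑ k ∈ Finset.univ.filter (fun k => f k = f i), I.get k := by
      rw [← Finset.sum_pair hne]
      exact Finset.sum_le_sum_of_subset_of_nonneg hsub
        (fun k _ _ => le_of_lt (hI _ (get_mem' I k)).1)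
    have := hf (f i)
    linarith
  have := Finset.card_le_card_of_injOn f (fun i _ => Finset.mem_univ (f i)) hinj
  simpa using this

lemma pack_third (I : List ℝ) (hI : ∀ a ∈ I, 0 < a ∧ a ≤ 1) {m : ℕ}
    (f : Fin I.length → Fin m) (hf : IsPacking I m f) :
    I.countP (fun a => decide ((2:ℝ)/3 ≤ a)) +
    I.countP (fun a => decide ((1:ℝ)/3 < a)) ≤ 2 * m := by
  rw [← card_filter_eq_countP, ← card_filter_eq_countP]
  set A := Finset.univ.filter
    (fun i : Fin I.length => (fun a => decide ((2:ℝ)/3 ≤ a)) (I.get i)) with hA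
  set T := Finset.univ.filter
    (fun i : Fin I.length => (fun a => decide ((1:ℝ)/3 < a)) (I.get i)) with hTd
  have hAcard : A.card = ∑ b : Fin m, (A.filter (fun i => f i = b)).card :=
    Finset.card_eq_sum_card_fiberwise (fun i _ => Finset.mem_univ (f i))
  have hTcard : T.card = ∑ b : Fin m, (T.filter (fun i => f i = b)).card :=
    Finset.card_eq_sum_card_fiberwise (fun i _ => Finset.mem_univ (f i))
  have key : ∀ b : Fin m,
      (A.filter (fun i => f i = b)).card + (T.filter (fun i => f i = b)).card ≤ 2 := by
    intro b
    set aa := A.filter (fun i => f i = b) with haa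
    set t := T.filter (fun i => f i = b) with ht
    have hat : aa ⊆ t := by
      intro i hi
      have h1 := Finset.mem_filter.1 hi
      have h2 := Finset.mem_filter.1 h1.1
      refine Finset.mem_filter.2 ⟨Finset.mem_filter.2 ⟨Finset.mem_univ _, ?_⟩, h1.2⟩
      have : (2:ℝ)/3 ≤ I.get i := by simpa using h2.2
      simp only [decide_eq_true_eq]; linarith
    have h13 : ∀ i ∈ t, (1:ℝ)/3 < I.get i := by
      intro i hi
      have := (Finset.mem_filter.1 (Finset.mem_filter.1 hi).1).2
      simpa using this
    have h23 : ∀ i ∈ aa, (2:ℝ)/3 ≤ I.get i := by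
      intro i hi
      have := (Finset.mem_filter.1 (Finset.mem_filter.1 hi).1).2
      simpa using this
    have hsumt : ∑ i ∈ t, I.get i ≤ 1 := by
      refine le_trans (Finset.sum_le_sum_of_subset_of_nonneg ?_
        (fun k _ _ => le_of_lt (hI _ (get_mem' I k)).1)) (hf b)
      intro i hi
      exact Finset.mem_filter.2 ⟨Finset.mem_univ _, (Finset.mem_filter.1 hi).2⟩
    by_contra hc
    push_neg at hc
    have hc3 : 3 ≤ aa.card + t.card := hc
    have hsplit : ∑ i ∈ t, I.get i = ∑ i ∈ t \ aa, I.get i + ∑ i ∈ aa, I.get i :=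
      (Finset.sum_sdiff hat).symm
    have haa_lb : (aa.card : ℝ) * (2/3) ≤ ∑ i ∈ aa, I.get i := by
      have := Finset.card_nsmul_le_sum aa (fun i => I.get i) (2/3) h23
      simpa [nsmul_eq_mul] using this
    rcases Finset.eq_empty_or_nonempty (t \ aa) with hemp | hne
    · have hta : t = aa :=
        Finset.Subset.antisymm (Finset.sdiff_eq_empty_iff_subset.1 hemp) hat
      rw [hta] at hc3
      have h2a : 2 ≤ aa.card := by omega
      have : (2:ℝ) ≤ (aa.card : ℝ) := by exact_mod_cast h2a
      have hs' : ∑ i ∈ aa, I.get i ≤ 1 := by rw [hta] at hsumt; exact hsumt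
      nlinarith
    · have hdiff_lb : ((t \ aa).card : ℝ) * (1/3) < ∑ i ∈ t \ aa, I.get i := by
        have := Finset.sum_lt_sum_of_nonempty hne
          (f := fun _ => (1:ℝ)/3) (g := fun i => I.get i)
          (fun i hi => h13 i (Finset.mem_sdiff.1 hi).1)
        simpa [Finset.sum_const, nsmul_eq_mul, mul_comm] using this
      have hcards : (t \ aa).card = t.card - aa.card := Finset.card_sdiff_of_subset hat
      have hle : aa.card ≤ t.card := Finset.card_le_card hat
      have hcast : ((t \ aa).card : ℝ) = (t.card : ℝ) - (aa.card : ℝ) := by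
        rw [hcards, Nat.cast_sub hle]
      have h3 : (3:ℝ) ≤ (aa.card : ℝ) + (t.card : ℝ) := by exact_mod_cast hc3
      rw [hcast] at hdiff_lb
      nlinarith
  calc A.card + T.card
      = ∑ b : Fin m, ((A.filter (fun i => f i = b)).card + (T.filter (fun i => f i = b)).card) := by
        rw [hAcard, hTcard, Finset.sum_add_distrib]
    _ ≤ ∑ _b : Fin m, 2 := Finset.sum_le_sum (fun b _ => key b)
    _ = 2 * m := by simp [mul_comm]

def PH3Inv (rL : ℝ) (st : PH3State) (nxl nl nm : ℕ) (S : ℝ) : Prop :=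
  st.nXL = nxl ∧ st.nLarge = nl ∧
  2 * st.nM = nm + (if st.mOpen then 1 else 0) ∧
  st.sizeS = S ∧ 0 ≤ st.sizeSL ∧ st.sizeSL ≤ S ∧
  st.sizeSL ≤ rL * S + 1/3 ∧ rL * S - 1/3 ≤ st.sizeSL ∧
  0 ≤ st.lsLevel ∧ (st.nLS : ℝ) ≤ 6 * st.sizeSL - 3 * st.lsLevel + 1 ∧
  0 ≤ st.sLevel ∧ (st.nS : ℝ) ≤ 3/2 * (S - st.sizeSL) - 3/2 * st.sLevel + 1

set_option maxHeartbeats 1000000 in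
lemma Inv_step (rL a : ℝ) (hrL0 : 0 ≤ rL) (hrL1 : rL ≤ 1)
    (ha0 : 0 < a) (ha1 : a ≤ 1) (st : PH3State) (nxl nl nm : ℕ) (S : ℝ)
    (h : PH3Inv rL st nxl nl nm S) :
    PH3Inv rL (PH3step rL st a)
      (nxl + if (2:ℝ)/3 ≤ a then 1 else 0)
      (nl + if (1:ℝ)/2 < a ∧ a < 2/3 then 1 else 0)
      (nm + if (1:ℝ)/3 < a ∧ a ≤ 1/2 then 1 else 0)
      (S + if a ≤ (1:ℝ)/3 then a else 0) := by
  obtain ⟨h1, h2, h3, h4, h5, h6, h7, h8, h9, h10, h11, h12⟩ := h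
  rw [PH3step]
  rcases le_or_gt (2/3 : ℝ) a with hxl | hxl
  · rw [if_pos hxl, if_pos hxl,
      if_neg (by rintro ⟨-, hh⟩; linarith : ¬((1:ℝ)/2 < a ∧ a < 2/3)),
      if_neg (by rintro ⟨-, hh⟩; linarith : ¬((1:ℝ)/3 < a ∧ a ≤ 1/2)),
      if_neg (by linarith : ¬(a ≤ (1:ℝ)/3))]
    exact ⟨by simp [h1], h2, h3, by simpa using h4, h5, by simpa using h6,
      by simpa using h7, by simpa using h8, h9, h10, h11, by simpa using h12⟩
  · rw [if_neg (by linarith : ¬((2:ℝ)/3 ≤ a))]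
    rcases lt_or_ge (1/2 : ℝ) a with hl | hl
    · rw [if_pos hl, if_neg (by linarith : ¬((2:ℝ)/3 ≤ a)),
        if_pos (⟨hl, hxl⟩ : (1:ℝ)/2 < a ∧ a < 2/3),
        if_neg (by rintro ⟨-, hh⟩; linarith : ¬((1:ℝ)/3 < a ∧ a ≤ 1/2)),
        if_neg (by linarith : ¬(a ≤ (1:ℝ)/3))]
      exact ⟨by simpa using h1, by simp [h2], h3, by simpa using h4, h5,
        by simpa using h6, by simpa using h7, by simpa using h8, h9, h10, h11,
        by simpa using h12⟩
    · rw [if_neg (by linarith : ¬((1:ℝ)/2 < a))]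
      rcases lt_or_ge (1/3 : ℝ) a with hm | hm
      · rw [if_pos hm, if_neg (by linarith : ¬((2:ℝ)/3 ≤ a)),
          if_neg (by rintro ⟨hh, -⟩; linarith : ¬((1:ℝ)/2 < a ∧ a < 2/3)),
          if_pos (⟨hm, hl⟩ : (1:ℝ)/3 < a ∧ a ≤ 1/2),
          if_neg (by linarith : ¬(a ≤ (1:ℝ)/3))]
        by_cases hmo : st.mOpen = true
        · rw [if_pos hmo]
          refine ⟨by simpa using h1, by simpa using h2, ?_, by simpa using h4, h5,
            by simpa using h6, by simpa using h7, by simpa using h8, h9, h10, h11,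
            by simpa using h12⟩
          rw [hmo] at h3; simp at h3 ⊢; omega
        · rw [if_neg hmo]
          refine ⟨by simpa using h1, by simpa using h2, ?_, by simpa using h4, h5,
            by simpa using h6, by simpa using h7, by simpa using h8, h9, h10, h11,
            by simpa using h12⟩
          rw [Bool.not_eq_true] at hmo
          rw [hmo] at h3; simp at h3 ⊢; omega
      · rw [if_neg (by linarith : ¬((1:ℝ)/3 < a)),
          if_neg (by linarith : ¬((2:ℝ)/3 ≤ a)),
          if_neg (by rintro ⟨hh, -⟩; linarith : ¬((1:ℝ)/2 < a ∧ a < 2/3)),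
          if_neg (by rintro ⟨hh, -⟩; linarith : ¬((1:ℝ)/3 < a ∧ a ≤ 1/2)),
          if_pos hm]
        have hra : 0 ≤ rL * a := mul_nonneg hrL0 ha0.le
        have hra3 : rL * a ≤ 1/3 := by nlinarith
        rcases lt_or_ge st.sizeSL (rL * st.sizeS) with hsl | hsl
        · rw [if_pos hsl]
          rw [h4] at hsl
          by_cases hc : st.nLS = 0 ∨ 1/3 < st.lsLevel + a
          · rw [if_pos hc]
            refine ⟨by simpa using h1, by simpa using h2, by simpa using h3,
              by simp [h4], by simp; linarith, by simp; linarith,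
              by simp; nlinarith, by simp; nlinarith, by simp; linarith, ?_,
              by simpa using h11, by simp; linarith⟩
            simp only []
            push_cast
            rcases hc with hc0 | hc1
            · rw [hc0]; push_cast; linarith
            · linarith
          · rw [if_neg hc]
            push_neg at hc
            refine ⟨by simpa using h1, by simpa using h2, by simpa using h3,
              by simp [h4], by simp; linarith, by simp; linarith,
              by simp; nlinarith, by simp; nlinarith, by simp; linarith,
              by simp; linarith, by simpa using h11, by simp; linarith⟩
        · rw [if_neg (by linarith : ¬(st.sizeSL < rL * st.sizeS))]
          rw [h4] at hsl
          by_cases hc : st.nS = 0 ∨ 1 < st.sLevel + a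
          · rw [if_pos hc]
            refine ⟨by simpa using h1, by simpa using h2, by simpa using h3,
              by simp [h4], by simpa using h5, by simp; linarith,
              by simp; nlinarith, by simp; nlinarith, by simpa using h9,
              by simpa using h10, by simp; linarith, ?_⟩
            simp only []
            push_cast
            rcases hc with hc0 | hc1
            · rw [hc0]; push_cast; linarith
            · linarith
          · rw [if_neg hc]
            push_neg at hc
            refine ⟨by simpa using h1, by simpa using h2, by simpa using h3,
              by simp [h4], by simpa using h5, by simp; linarith,
              by simp; nlinarith, by simp; nlinarith, by simpa using h9,
              by simpa using h10, by simp; linarith, by simp; linarith⟩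

lemma PH3Inv_foldl (rL : ℝ) (hrL0 : 0 ≤ rL) (hrL1 : rL ≤ 1) :
    ∀ (l : List ℝ), (∀ a ∈ l, 0 < a ∧ a ≤ 1) → ∀ st nxl nl nm S,
      PH3Inv rL st nxl nl nm S →
      PH3Inv rL (l.foldl (PH3step rL) st)
        (nxl + l.countP (fun a => decide ((2:ℝ)/3 ≤ a)))
        (nl + l.countP (fun a => decide ((1:ℝ)/2 < a ∧ a < 2/3)))
        (nm + l.countP (fun a => decide ((1:ℝ)/3 < a ∧ a ≤ 1/2)))
        (S + (l.filter (fun a => decide (a ≤ (1:ℝ)/3))).sum) := by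
  intro l
  induction l with
  | nil => intro _ st nxl nl nm S h; simpa using h
  | cons a t ih =>
      intro hmem st nxl nl nm S h
      have ha := hmem a (List.mem_cons_self)
      have hstep := Inv_step rL a hrL0 hrL1 ha.1 ha.2 st nxl nl nm S h
      have ht := ih (fun x hx => hmem x (List.mem_cons_of_mem a hx)) _ _ _ _ _ hstep
      rw [List.foldl_cons]
      have e1 : nxl + (a :: t).countP (fun a => decide ((2:ℝ)/3 ≤ a)) =
          (nxl + if (2:ℝ)/3 ≤ a then 1 else 0) +
            t.countP (fun a => decide ((2:ℝ)/3 ≤ a)) := by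
        simp only [List.countP_cons, decide_eq_true_eq]; omega
      have e2 : nl + (a :: t).countP (fun a => decide ((1:ℝ)/2 < a ∧ a < 2/3)) =
          (nl + if (1:ℝ)/2 < a ∧ a < 2/3 then 1 else 0) +
            t.countP (fun a => decide ((1:ℝ)/2 < a ∧ a < 2/3)) := by
        simp only [List.countP_cons, decide_eq_true_eq]; omega
      have e3 : nm + (a :: t).countP (fun a => decide ((1:ℝ)/3 < a ∧ a ≤ 1/2)) =
          (nm + if (1:ℝ)/3 < a ∧ a ≤ 1/2 then 1 else 0) +
            t.countP (fun a => decide ((1:ℝ)/3 < a ∧ a ≤ 1/2)) := by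
        simp only [List.countP_cons, decide_eq_true_eq]; omega
      have e4 : S + ((a :: t).filter (fun a => decide (a ≤ (1:ℝ)/3))).sum =
          (S + if a ≤ (1:ℝ)/3 then a else 0) +
            (t.filter (fun a => decide (a ≤ (1:ℝ)/3))).sum := by
        rw [List.filter_cons]
        by_cases hp : a ≤ (1:ℝ)/3
        · rw [if_pos hp, if_pos (by simpa using hp)]; simp; ring
        · rw [if_neg hp, if_neg (by simpa using hp)]; simp
      rw [e1, e2, e3, e4]
      exact ht

lemma PH3Inv_init (rL : ℝ) : PH3Inv rL ⟨0, 0, 0, false, 0, 0, 0, 0, 0, 0⟩ 0 0 0 0 := by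
  refine ⟨rfl, rfl, rfl, rfl, le_refl _, le_refl _, ?_, ?_, le_refl _, ?_, le_refl _, ?_⟩ <;>
    norm_num

lemma countP_split_half (I : List ℝ) :
    I.countP (fun a => decide ((1:ℝ)/2 < a)) =
    I.countP (fun a => decide ((2:ℝ)/3 ≤ a)) +
    I.countP (fun a => decide ((1:ℝ)/2 < a ∧ a < 2/3)) := by
  induction I with
  | nil => simp
  | cons a t ih =>
    simp only [List.countP_cons, decide_eq_true_eq, ih]
    rcases le_or_gt (2/3:ℝ) a with h1 | h1
    · rw [if_pos (by linarith : (1:ℝ)/2 < a), if_pos h1,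
        if_neg (by rintro ⟨-,hh⟩; linarith : ¬((1:ℝ)/2 < a ∧ a < 2/3))]
      omega
    · rcases lt_or_ge (1/2:ℝ) a with h2 | h2
      · rw [if_pos h2, if_neg (by linarith : ¬((2:ℝ)/3 ≤ a)),
          if_pos (⟨h2, h1⟩ : (1:ℝ)/2 < a ∧ a < 2/3)]
        omega
      · rw [if_neg (by linarith : ¬((1:ℝ)/2 < a)),
          if_neg (by linarith : ¬((2:ℝ)/3 ≤ a)),
          if_neg (by rintro ⟨hh,-⟩; linarith : ¬((1:ℝ)/2 < a ∧ a < 2/3))]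
        omega

lemma countP_split_third (I : List ℝ) :
    I.countP (fun a => decide ((1:ℝ)/3 < a)) =
    I.countP (fun a => decide ((2:ℝ)/3 ≤ a)) +
    I.countP (fun a => decide ((1:ℝ)/2 < a ∧ a < 2/3)) +
    I.countP (fun a => decide ((1:ℝ)/3 < a ∧ a ≤ 1/2)) := by
  induction I with
  | nil => simp
  | cons a t ih =>
    simp only [List.countP_cons, decide_eq_true_eq, ih]
    rcases le_or_gt (2/3:ℝ) a with h1 | h1
    · rw [if_pos (by linarith : (1:ℝ)/3 < a), if_pos h1,
        if_neg (by rintro ⟨-,hh⟩; linarith : ¬((1:ℝ)/2 < a ∧ a < 2/3)),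
        if_neg (by rintro ⟨-,hh⟩; linarith : ¬((1:ℝ)/3 < a ∧ a ≤ 1/2))]
      omega
    · rcases lt_or_ge (1/2:ℝ) a with h2 | h2
      · rw [if_pos (by linarith : (1:ℝ)/3 < a), if_neg (by linarith : ¬((2:ℝ)/3 ≤ a)),
          if_pos (⟨h2, h1⟩ : (1:ℝ)/2 < a ∧ a < 2/3),
          if_neg (by rintro ⟨-,hh⟩; linarith : ¬((1:ℝ)/3 < a ∧ a ≤ 1/2))]
        omega
      · rcases lt_or_ge (1/3:ℝ) a with h3 | h3
        · rw [if_pos h3, if_neg (by linarith : ¬((2:ℝ)/3 ≤ a)),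
            if_neg (by rintro ⟨hh,-⟩; linarith : ¬((1:ℝ)/2 < a ∧ a < 2/3)),
            if_pos (⟨h3, h2⟩ : (1:ℝ)/3 < a ∧ a ≤ 1/2)]
          omega
        · rw [if_neg (by linarith : ¬((1:ℝ)/3 < a)),
            if_neg (by linarith : ¬((2:ℝ)/3 ≤ a)),
            if_neg (by rintro ⟨hh,-⟩; linarith : ¬((1:ℝ)/2 < a ∧ a < 2/3)),
            if_neg (by rintro ⟨hh,-⟩; linarith : ¬((1:ℝ)/3 < a ∧ a ≤ 1/2))]
          omega

lemma sum_lower (I : List ℝ) :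
    2/3 * (I.countP (fun a => decide ((2:ℝ)/3 ≤ a)) : ℝ) +
    1/2 * (I.countP (fun a => decide ((1:ℝ)/2 < a ∧ a < 2/3)) : ℝ) +
    1/3 * (I.countP (fun a => decide ((1:ℝ)/3 < a ∧ a ≤ 1/2)) : ℝ) +
    (I.filter (fun a => decide (a ≤ (1:ℝ)/3))).sum ≤ I.sum := by
  induction I with
  | nil => simp
  | cons a t ih =>
    simp only [List.countP_cons, decide_eq_true_eq, List.filter_cons, List.sum_cons]
    rcases le_or_gt (2/3:ℝ) a with h1 | h1
    · rw [if_pos h1, if_neg (by rintro ⟨-,hh⟩; linarith : ¬((1:ℝ)/2 < a ∧ a < 2/3)),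
        if_neg (by rintro ⟨-,hh⟩; linarith : ¬((1:ℝ)/3 < a ∧ a ≤ 1/2)),
        if_neg (by linarith : ¬(a ≤ (1:ℝ)/3))]
      push_cast
      linarith
    · rcases lt_or_ge (1/2:ℝ) a with h2 | h2
      · rw [if_neg (by linarith : ¬((2:ℝ)/3 ≤ a)),
          if_pos (⟨h2, h1⟩ : (1:ℝ)/2 < a ∧ a < 2/3),
          if_neg (by rintro ⟨-,hh⟩; linarith : ¬((1:ℝ)/3 < a ∧ a ≤ 1/2)),
          if_neg (by linarith : ¬(a ≤ (1:ℝ)/3))]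
        push_cast
        linarith
      · rcases lt_or_ge (1/3:ℝ) a with h3 | h3
        · rw [if_neg (by linarith : ¬((2:ℝ)/3 ≤ a)),
            if_neg (by rintro ⟨hh,-⟩; linarith : ¬((1:ℝ)/2 < a ∧ a < 2/3)),
            if_pos (⟨h3, h2⟩ : (1:ℝ)/3 < a ∧ a ≤ 1/2),
            if_neg (by linarith : ¬(a ≤ (1:ℝ)/3))]
          push_cast
          linarith
        · rw [if_neg (by linarith : ¬((2:ℝ)/3 ≤ a)),
            if_neg (by rintro ⟨hh,-⟩; linarith : ¬((1:ℝ)/2 < a ∧ a < 2/3)),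
            if_neg (by rintro ⟨hh,-⟩; linarith : ¬((1:ℝ)/3 < a ∧ a ≤ 1/2)),
            if_pos (h3 : a ≤ (1:ℝ)/3)]
          push_cast
          simp only [List.sum_cons]
          linarith

set_option maxHeartbeats 1000000 in
lemma coreH2 (rL ρ X L M S O : ℝ) (hrL0 : 0 ≤ rL) (hrL1 : rL ≤ 1)
    (hρ0 : 0 ≤ ρ) (hρ1 : ρ ≤ 1) (hS : 0 ≤ S) (hX : 0 ≤ X) (hM : 0 ≤ M)
    (hL6 : 6*ρ*S ≤ L)
    (hO1 : X + L ≤ O) (hO2 : 2/3*X + L/2 + M/3 + S ≤ O) :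
    X + M/2 + 3/2*S + 9/2*(rL*S) ≤ Bfun rL ρ * O := by
  have hE : 0 ≤ L - 6*ρ*S := by linarith
  rcases le_or_gt ρ (1/3) with h13 | h13
  · have hden : (0:ℝ) < 6*ρ+2 := by linarith
    rcases le_or_gt rL ρ with hc | hc
    · have hB : Bfun rL ρ = (9*ρ+3 + 3*(ρ-rL))/(6*ρ+2) := by
        rw [Bfun, if_pos hc, if_pos h13]; field_simp; ring
      rw [hB, div_mul_eq_mul_div _ _ O, le_div_iff₀ hden]
      have hK : (0:ℝ) ≤ 9*ρ+3 + 3*(ρ-rL) := by linarith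
      have hO2' := mul_le_mul_of_nonneg_left hO2 hK
      have hd : (0:ℝ) ≤ ρ - rL := by linarith
      have p1 := mul_nonneg hS hd
      have p2 := mul_nonneg hρ0 (mul_nonneg hS hd)
      have p3 := mul_nonneg hM hd
      have p4 := mul_nonneg hE (by linarith : (0:ℝ) ≤ 1 - rL)
      have p5 := mul_nonneg hρ0 hE
      have p6 := mul_nonneg hX hd
      nlinarith [hO2', p1, p2, p3, p4, p5, p6]
    · have hB : Bfun rL ρ = (9*ρ+3 + 9*(rL-ρ))/(6*ρ+2) := by
        rw [Bfun, if_neg (by linarith), if_pos h13]; field_simp; ring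
      rw [hB, div_mul_eq_mul_div _ _ O, le_div_iff₀ hden]
      have hK : (0:ℝ) ≤ 9*ρ+3 + 9*(rL-ρ) := by linarith
      have hO2' := mul_le_mul_of_nonneg_left hO2 hK
      have hd : (0:ℝ) ≤ rL - ρ := by linarith
      have p1 := mul_nonneg hM hd
      have p2 := mul_nonneg hrL0 hE
      have p3 := mul_nonneg hX hd
      nlinarith [hO2', p1, p2, p3, hE]
  · have hρpos : (0:ℝ) < ρ := by linarith
    have hden : (0:ℝ) < 4*ρ := by linarith
    rcases le_or_gt rL ρ with hc | hc
    · have hB : Bfun rL ρ = (6*ρ + (ρ-rL))/(4*ρ) := by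
        rw [Bfun, if_pos hc, if_neg (by linarith)]; field_simp; ring
      rw [hB, div_mul_eq_mul_div _ _ O, le_div_iff₀ hden]
      have hd : (0:ℝ) ≤ ρ - rL := by linarith
      have hO1' := mul_le_mul_of_nonneg_left hO1 hd
      have hO2' := mul_le_mul_of_nonneg_left hO2 (by linarith : (0:ℝ) ≤ 6*ρ)
      have p1 := mul_nonneg hρ0 (mul_nonneg hS hd)
      have p2 := mul_nonneg hρ0 hE
      have p3 := mul_nonneg hE hd
      have p4 := mul_nonneg hX hd
      nlinarith [hO1', hO2', p1, p2, p3, p4]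
    · have hB : Bfun rL ρ = (6*ρ + 3*(rL-ρ))/(4*ρ) := by
        rw [Bfun, if_neg (by linarith), if_neg (by linarith)]; field_simp; ring
      rw [hB, div_mul_eq_mul_div _ _ O, le_div_iff₀ hden]
      have hd : (0:ℝ) ≤ rL - ρ := by linarith
      have hO1' := mul_le_mul_of_nonneg_left hO1 (by linarith : (0:ℝ) ≤ 3*(rL-ρ))
      have hO2' := mul_le_mul_of_nonneg_left hO2 (by linarith : (0:ℝ) ≤ 6*ρ)
      have p1 := mul_nonneg hrL0 hE
      have p2 := mul_nonneg hX hd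
      nlinarith [hO1', hO2', p1, p2]

set_option maxHeartbeats 1000000 in
lemma coreH1 (rL ρ X L M S O : ℝ) (hrL0 : 0 ≤ rL) (hrL1 : rL ≤ 1)
    (hρ0 : 0 ≤ ρ) (hρ1 : ρ ≤ 1) (hS : 0 ≤ S) (hX : 0 ≤ X) (hM : 0 ≤ M)
    (hL6 : 6*ρ*S ≤ L) (hρeq : ρ = 1 ∨ 6*ρ*S = L)
    (hO1 : X + L ≤ O) (hO2 : 2/3*X + L/2 + M/3 + S ≤ O)
    (hO3 : X + L/2 + M/2 ≤ O) :
    X + L + M/2 + 3/2*((1-rL)*S) ≤ Bfun rL ρ * O := by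
  rcases hρeq with hρe | heq
  · subst hρe
    have hB : Bfun rL 1 = 3/2 + 1/4*(1-rL) := by
      rw [Bfun, if_pos hrL1, if_neg (by norm_num)]; ring
    rw [hB]
    have hO1' := mul_le_mul_of_nonneg_left hO1
      (by linarith : (0:ℝ) ≤ 1/4*(1-rL) + rL/2)
    have hO2' := mul_le_mul_of_nonneg_left hO2
      (by linarith : (0:ℝ) ≤ 3/2*(1-rL))
    have hO3' := mul_le_mul_of_nonneg_left hO3 hrL0
    have hS6 : 6*1*S ≤ L := hL6
    have p1 := mul_nonneg hX hrL0
    have p2 := mul_nonneg hS (by linarith : (0:ℝ) ≤ 1 - rL)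
    nlinarith [hO1', hO2', hO3', hX, p1, p2, hS6]
  · rcases le_or_gt rL ρ with hc | hc
    · rcases le_or_gt ρ (1/3) with h13 | h13
      · have hden : (0:ℝ) < 6*ρ+2 := by linarith
        have hB : Bfun rL ρ = (9*ρ+3 + 3*(ρ-rL))/(6*ρ+2) := by
          rw [Bfun, if_pos hc, if_pos h13]; field_simp; ring
        rw [hB, div_mul_eq_mul_div _ _ O, le_div_iff₀ hden]
        have hK : (0:ℝ) ≤ 9*ρ+3 + 3*(ρ-rL) := by linarith
        have hO2' := mul_le_mul_of_nonneg_left hO2 hK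
        have hd : (0:ℝ) ≤ ρ - rL := by linarith
        have p1 := mul_nonneg hM hd
        have p2 := mul_nonneg hX hd
        nlinarith [hO2', p1, p2, heq]
      · have hρpos : (0:ℝ) < ρ := by linarith
        have hden : (0:ℝ) < 4*ρ := by linarith
        have hB : Bfun rL ρ = (6*ρ + (ρ-rL))/(4*ρ) := by
          rw [Bfun, if_pos hc, if_neg (by linarith)]; field_simp; ring
        rw [hB, div_mul_eq_mul_div _ _ O, le_div_iff₀ hden]
        have hd : (0:ℝ) ≤ ρ - rL := by linarith
        have hO1' := mul_le_mul_of_nonneg_left hO1 hd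
        have hO2' := mul_le_mul_of_nonneg_left hO2 (by linarith : (0:ℝ) ≤ 6*ρ)
        have p1 := mul_nonneg hX hd
        nlinarith [hO1', hO2', p1, heq]
    · -- rL > ρ : 3/2 * F2 suffices, using the equality
      have hL0 : (0:ℝ) ≤ L := by nlinarith [mul_nonneg hρ0 hS]
      have hO0 : (0:ℝ) ≤ O := by linarith
      have hB32 : 3/2 ≤ Bfun rL ρ := by
        rw [Bfun, if_neg (by linarith)]
        rcases le_or_gt ρ (1/3) with h13 | h13
        · rw [if_pos h13]
          have h1 : (0:ℝ) < 6*ρ+2 := by linarith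
          have h2 : (0:ℝ) ≤ 9/(6*ρ+2) := le_of_lt (div_pos (by norm_num) h1)
          nlinarith [mul_nonneg h2 (by linarith : (0:ℝ) ≤ rL - ρ)]
        · rw [if_neg (by linarith)]
          have h1 : (0:ℝ) < 4*ρ := by linarith
          have h2 : (0:ℝ) ≤ 3/(4*ρ) := le_of_lt (div_pos (by norm_num) h1)
          nlinarith [mul_nonneg h2 (by linarith : (0:ℝ) ≤ rL - ρ)]
      have h32 : X + L + M/2 + 3/2*((1-rL)*S) ≤ 3/2 * O := by
        have p1 := mul_nonneg hS (by linarith : (0:ℝ) ≤ rL - ρ)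
        nlinarith [hO2, heq, p1]
      calc X + L + M/2 + 3/2*((1-rL)*S) ≤ 3/2 * O := h32
        _ ≤ Bfun rL ρ * O := mul_le_mul_of_nonneg_right hB32 hO0

set_option maxHeartbeats 4000000 in
/-- Competitive-ratio bound for PH3 (Theorem 3 of the paper): for every input list `I` of
items in `(0,1]` and parameter `r_L ∈ [0,1]`, with
`r* = min(|I_L| / (6·size(I_S)), 1)` (taken to be `1` when `size(I_S) = 0`),
PH3 uses at most `B(r_L, r*)·OPT(I) + 9/2` bins. -/
theorem PH3_competitive (I : List ℝ) (hI : ∀ a ∈ I, 0 < a ∧ a ≤ 1)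
    (rL : ℝ) (hrL : rL ∈ Set.Icc (0 : ℝ) 1) :
    ∀ rstar : ℝ,
      rstar = (if (I.filter (fun a => decide (a ≤ 1/3))).sum = 0 then 1
               else min ((I.countP (fun a => decide (1/2 < a ∧ a < 2/3)) : ℝ) /
                          (6 * (I.filter (fun a => decide (a ≤ 1/3))).sum)) 1) →
      (PH3 rL I : ℝ) ≤ Bfun rL rstar * (OPT I : ℝ) + 9/2 := by
  obtain ⟨hrL0, hrL1⟩ := hrL
  intro ρ hρdef
  -- abbreviations
  have hXnn : (0:ℝ) ≤ (I.countP (fun a => decide ((2:ℝ)/3 ≤ a)) : ℝ) := Nat.cast_nonneg _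
  have hLnn : (0:ℝ) ≤ (I.countP (fun a => decide ((1:ℝ)/2 < a ∧ a < 2/3)) : ℝ) := Nat.cast_nonneg _
  have hMnn : (0:ℝ) ≤ (I.countP (fun a => decide ((1:ℝ)/3 < a ∧ a ≤ 1/2)) : ℝ) := Nat.cast_nonneg _
  have hSnn : (0:ℝ) ≤ (I.filter (fun a => decide (a ≤ (1:ℝ)/3))).sum := by
    apply List.sum_nonneg
    intro x hx
    exact (hI x (List.mem_filter.1 hx).1).1.le
  -- OPT lower bounds
  obtain ⟨f, hf⟩ := opt_spec I hI
  have hhalf := pack_half I hI f hf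
  have hthird := pack_third I hI f hf
  have hsize := pack_size I f hf
  have hO1 : (I.countP (fun a => decide ((2:ℝ)/3 ≤ a)) : ℝ) +
      (I.countP (fun a => decide ((1:ℝ)/2 < a ∧ a < 2/3)) : ℝ) ≤ (OPT I : ℝ) := by
    rw [countP_split_half] at hhalf
    exact_mod_cast hhalf
  have hO2 : 2/3 * (I.countP (fun a => decide ((2:ℝ)/3 ≤ a)) : ℝ) +
      (I.countP (fun a => decide ((1:ℝ)/2 < a ∧ a < 2/3)) : ℝ)/2 +
      (I.countP (fun a => decide ((1:ℝ)/3 < a ∧ a ≤ 1/2)) : ℝ)/3 +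
      (I.filter (fun a => decide (a ≤ (1:ℝ)/3))).sum ≤ (OPT I : ℝ) := by
    have := sum_lower I
    linarith
  have hO3 : (I.countP (fun a => decide ((2:ℝ)/3 ≤ a)) : ℝ) +
      (I.countP (fun a => decide ((1:ℝ)/2 < a ∧ a < 2/3)) : ℝ)/2 +
      (I.countP (fun a => decide ((1:ℝ)/3 < a ∧ a ≤ 1/2)) : ℝ)/2 ≤ (OPT I : ℝ) := by
    rw [countP_split_third] at hthird
    have := (Nat.cast_le (α := ℝ)).2 hthird
    push_cast at this
    linarith
  -- facts about ρ
  have hρfacts : 0 ≤ ρ ∧ ρ ≤ 1 ∧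
      6*ρ*(I.filter (fun a => decide (a ≤ (1:ℝ)/3))).sum ≤
        (I.countP (fun a => decide ((1:ℝ)/2 < a ∧ a < 2/3)) : ℝ) ∧
      (ρ = 1 ∨ 6*ρ*(I.filter (fun a => decide (a ≤ (1:ℝ)/3))).sum =
        (I.countP (fun a => decide ((1:ℝ)/2 < a ∧ a < 2/3)) : ℝ)) := by
    by_cases hS0 : (I.filter (fun a => decide (a ≤ (1:ℝ)/3))).sum = 0
    · rw [if_pos (by exact_mod_cast hS0)] at hρdef
      subst hρdef
      refine ⟨zero_le_one, le_refl _, ?_, Or.inl rfl⟩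
      rw [hS0]
      simpa using hLnn
    · have hSpos : 0 < (I.filter (fun a => decide (a ≤ (1:ℝ)/3))).sum :=
        lt_of_le_of_ne hSnn (Ne.symm hS0)
      rw [if_neg (by exact_mod_cast hS0)] at hρdef
      have h6S : (0:ℝ) < 6 * (I.filter (fun a => decide (a ≤ (1:ℝ)/3))).sum := by linarith
      rcases le_total ((I.countP (fun a => decide ((1:ℝ)/2 < a ∧ a < 2/3)) : ℝ) /
          (6 * (I.filter (fun a => decide (a ≤ (1:ℝ)/3))).sum)) 1 with hd1 | hd1
      · rw [min_eq_left hd1] at hρdef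
        subst hρdef
        have heq : 6 * ((I.countP (fun a => decide ((1:ℝ)/2 < a ∧ a < 2/3)) : ℝ) /
            (6 * (I.filter (fun a => decide (a ≤ (1:ℝ)/3))).sum)) *
            (I.filter (fun a => decide (a ≤ (1:ℝ)/3))).sum =
            (I.countP (fun a => decide ((1:ℝ)/2 < a ∧ a < 2/3)) : ℝ) := by
          rw [mul_div_assoc', div_mul_eq_mul_div, div_eq_iff h6S.ne']
          ring
        exact ⟨div_nonneg hLnn h6S.le, hd1, le_of_eq heq, Or.inr heq⟩
      · rw [min_eq_right hd1] at hρdef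
        subst hρdef
        have h6 : 6 * (I.filter (fun a => decide (a ≤ (1:ℝ)/3))).sum ≤
            (I.countP (fun a => decide ((1:ℝ)/2 < a ∧ a < 2/3)) : ℝ) := by
          have := (le_div_iff₀ h6S).1 hd1
          linarith
        exact ⟨zero_le_one, le_refl _, by linarith, Or.inl rfl⟩
  obtain ⟨hρ0, hρ1, hL6, hρeq⟩ := hρfacts
  -- the invariant for the final state
  have hinv := PH3Inv_foldl rL hrL0 hrL1 I hI ⟨0, 0, 0, false, 0, 0, 0, 0, 0, 0⟩
    0 0 0 0 (PH3Inv_init rL)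
  simp only [Nat.zero_add, zero_add] at hinv
  obtain ⟨g1, g2, g3, g4, g5, g6, g7, g8, g9, g10, g11, g12⟩ := hinv
  simp only [PH3]
  have hnMn : 2 * (I.foldl (PH3step rL) ⟨0, 0, 0, false, 0, 0, 0, 0, 0, 0⟩).nM ≤
      I.countP (fun a => decide ((1:ℝ)/3 < a ∧ a ≤ 1/2)) + 1 := by
    rw [g3]
    rcases (I.foldl (PH3step rL) ⟨0, 0, 0, false, 0, 0, 0, 0, 0, 0⟩).mOpen <;> simp
  have hnM : ((I.foldl (PH3step rL) ⟨0, 0, 0, false, 0, 0, 0, 0, 0, 0⟩).nM : ℝ) ≤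
      ((I.countP (fun a => decide ((1:ℝ)/3 < a ∧ a ≤ 1/2)) : ℝ) + 1)/2 := by
    have := (Nat.cast_le (α := ℝ)).2 hnMn
    push_cast at this
    linarith
  have hnS : ((I.foldl (PH3step rL) ⟨0, 0, 0, false, 0, 0, 0, 0, 0, 0⟩).nS : ℝ) ≤
      3/2 * ((I.filter (fun a => decide (a ≤ (1:ℝ)/3))).sum -
        (I.foldl (PH3step rL) ⟨0, 0, 0, false, 0, 0, 0, 0, 0, 0⟩).sizeSL) + 1 := by
    linarith
  have hnLS : ((I.foldl (PH3step rL) ⟨0, 0, 0, false, 0, 0, 0, 0, 0, 0⟩).nLS : ℝ) ≤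
      6 * (I.foldl (PH3step rL) ⟨0, 0, 0, false, 0, 0, 0, 0, 0, 0⟩).sizeSL + 1 := by
    linarith
  push_cast
  rw [g1, g2]
  rcases le_total ((I.foldl (PH3step rL) ⟨0, 0, 0, false, 0, 0, 0, 0, 0, 0⟩).nLS)
      (I.countP (fun a => decide ((1:ℝ)/2 < a ∧ a < 2/3))) with hmx | hmx
  · -- the max is the number of large items : use coreH1
    have hmax : max ((I.countP (fun a => decide ((1:ℝ)/2 < a ∧ a < 2/3)) : ℝ))
        (((I.foldl (PH3step rL) ⟨0, 0, 0, false, 0, 0, 0, 0, 0, 0⟩).nLS : ℝ)) =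
        ((I.countP (fun a => decide ((1:ℝ)/2 < a ∧ a < 2/3)) : ℝ)) :=
      max_eq_left (by exact_mod_cast hmx)
    rw [hmax]
    have HC := coreH1 rL ρ _ _ _ _ _ hrL0 hrL1 hρ0 hρ1 hSnn hXnn hMnn hL6 hρeq hO1 hO2 hO3
    -- 3/2*(S - s) ≤ 3/2*((1-rL)*S) + 1/2  using g8
    nlinarith [HC, hnM, hnS, g8]
  · -- the max is nLS : use coreH2
    have hmax : max ((I.countP (fun a => decide ((1:ℝ)/2 < a ∧ a < 2/3)) : ℝ))
        (((I.foldl (PH3step rL) ⟨0, 0, 0, false, 0, 0, 0, 0, 0, 0⟩).nLS : ℝ)) =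
        (((I.foldl (PH3step rL) ⟨0, 0, 0, false, 0, 0, 0, 0, 0, 0⟩).nLS : ℝ)) :=
      max_eq_right (by exact_mod_cast hmx)
    rw [hmax]
    have HC := coreH2 rL ρ _ _ _ _ _ hrL0 hrL1 hρ0 hρ1 hSnn hXnn hMnn hL6 hO1 hO2
    nlinarith [HC, hnM, hnS, hnLS, g7]
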